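/- Let $R = k[x_1,\dots,x_m]$ and $I$ a ${}^*$strongly Golod monomial ideal ($\partial^*(I)^2 \subseteq I$). If $f$ is a monomial with $f^r \in I^r$ for some $r \ge 1$ and $x_i$ is a variable dividing $f$, then $(f/x_i)^r \in I^{\lfloor r/2 \rfloor}$. -/

import Mathlib

open MvPolynomial

variable {m : ℕ} {k : Type*}

/-- An ideal of `k[x_1, …, x_m]` is a monomial ideal if it is generated by monomials. -/
def IsMonomialIdeal [Field k] (I : Ideal (MvPolynomial (Fin m) k)) : Prop :=
  ∃ S : Set (Fin m →₀ ℕ), I = Ideal.span ((fun e => monomial e (1 : k)) '' S)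

/-- `e` is the exponent vector of a minimal monomial generator of `I`: the monomial `x^e`
lies in `I` and no proper divisor of it lies in `I`. -/
def IsMinMonomialGen [Field k] (I : Ideal (MvPolynomial (Fin m) k)) (e : Fin m →₀ ℕ) : Prop :=
  monomial e (1 : k) ∈ I ∧ ∀ e' : Fin m →₀ ℕ, e' ≤ e → e' ≠ e → monomial e' (1 : k) ∉ I

/-- `∂*(I)`: the ideal generated by all quotients `f / x_i`, where `f` runs over the minimal
monomial generators of `I` and `x_i` over the variables dividing `f`. -/
noncomputable def partialStar [Field k] (I : Ideal (MvPolynomial (Fin m) k)) :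
    Ideal (MvPolynomial (Fin m) k) :=
  Ideal.span { p | ∃ (e : Fin m →₀ ℕ) (i : Fin m), IsMinMonomialGen I e ∧ e i ≠ 0 ∧
    p = monomial (e - Finsupp.single i 1) (1 : k) }

lemma aux_exists_min_aux [Field k] (I : Ideal (MvPolynomial (Fin m) k)) :
    ∀ n : ℕ, ∀ e0 : Fin m →₀ ℕ, (∑ j, e0 j) < n → monomial e0 (1 : k) ∈ I →
      ∃ σ, σ ≤ e0 ∧ IsMinMonomialGen I σ := by
  intro n
  induction n with
  | zero => intro e0 h; exact absurd h (Nat.not_lt_zero _)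
  | succ n ih =>
    intro e0 hlt h
    by_cases hc : ∃ e', e' ≤ e0 ∧ e' ≠ e0 ∧ monomial e' (1 : k) ∈ I
    · obtain ⟨e', hle, hne, hmem⟩ := hc
      have hjlt : ∃ j, e' j < e0 j := by
        by_contra hcon
        push_neg at hcon
        exact hne (by ext j; exact le_antisymm (Finsupp.le_def.mp hle j) (hcon j))
      obtain ⟨j, hj⟩ := hjlt
      have hsum : (∑ j, e' j) < ∑ j, e0 j :=
        Finset.sum_lt_sum (fun j _ => Finsupp.le_def.mp hle j) ⟨j, Finset.mem_univ j, hj⟩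
      obtain ⟨σ, hσle, hσ⟩ := ih e' (by omega) hmem
      exact ⟨σ, hσle.trans hle, hσ⟩
    · push_neg at hc
      exact ⟨e0, le_refl _, h, fun e' h1 h2 => hc e' h1 h2⟩

lemma aux_exists_min [Field k] (I : Ideal (MvPolynomial (Fin m) k)) (e0 : Fin m →₀ ℕ)
    (h : monomial e0 (1 : k) ∈ I) : ∃ σ, σ ≤ e0 ∧ IsMinMonomialGen I σ :=
  aux_exists_min_aux I (∑ j, e0 j + 1) e0 (by omega) h

lemma aux_span_min_eq [Field k] (I : Ideal (MvPolynomial (Fin m) k))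
    (hmon : IsMonomialIdeal I) :
    I = Ideal.span ((fun e => monomial e (1 : k)) '' {σ | IsMinMonomialGen I σ}) := by
  refine le_antisymm ?_ ?_
  · obtain ⟨S, hS⟩ := hmon
    conv_lhs => rw [hS]
    refine Ideal.span_le.mpr ?_
    rintro p ⟨e0, he0, rfl⟩
    have hmem : monomial e0 (1 : k) ∈ I := hS ▸ Ideal.subset_span ⟨e0, he0, rfl⟩
    obtain ⟨σ, hle, hσ⟩ := aux_exists_min I e0 hmem
    have heq : monomial e0 (1 : k) = monomial (e0 - σ) (1 : k) * monomial σ (1 : k) := by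
      rw [monomial_mul, one_mul, tsub_add_cancel_of_le hle]
    show monomial e0 (1 : k) ∈ _
    rw [heq]
    exact Ideal.mul_mem_left _ _ (Ideal.subset_span ⟨σ, hσ, rfl⟩)
  · refine Ideal.span_le.mpr ?_
    rintro p ⟨σ, hσ, rfl⟩
    exact hσ.1

lemma aux_pow_le_span_sums [Field k] (S : Set (Fin m →₀ ℕ)) (r : ℕ) :
    (Ideal.span ((fun e => monomial e (1 : k)) '' S)) ^ r ≤
      Ideal.span ((fun e => monomial e (1 : k)) ''
        {σ | ∃ t : Fin r → (Fin m →₀ ℕ), (∀ j, t j ∈ S) ∧ σ = ∑ j, t j}) := by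
  induction r with
  | zero =>
    rw [pow_zero, Ideal.one_eq_top, top_le_iff, Ideal.eq_top_iff_one]
    have h1 : (1 : MvPolynomial (Fin m) k) = monomial 0 1 := by simp
    rw [h1]
    exact Ideal.subset_span ⟨0, ⟨Fin.elim0, fun j => j.elim0, by simp⟩, rfl⟩
  | succ r ih =>
    rw [pow_succ]
    calc _ ≤ Ideal.span ((fun e => monomial e (1 : k)) ''
            {σ | ∃ t : Fin r → (Fin m →₀ ℕ), (∀ j, t j ∈ S) ∧ σ = ∑ j, t j}) *
          Ideal.span ((fun e => monomial e (1 : k)) '' S) := Ideal.mul_mono ih le_rfl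
      _ ≤ _ := by
          rw [Ideal.span_mul_span']
          refine Ideal.span_le.mpr ?_
          rintro p ⟨p1, ⟨σ, ⟨t, ht, rfl⟩, rfl⟩, p2, ⟨a, ha, rfl⟩, rfl⟩
          show (monomial (∑ j, t j) (1 : k)) * monomial a 1 ∈ _
          set t' : Fin (r + 1) → (Fin m →₀ ℕ) := Fin.snoc t a with ht'
          have heq : (monomial (∑ j, t j) (1 : k)) * monomial a 1 =
              monomial (∑ j, t' j) (1 : k) := by
            rw [monomial_mul, one_mul, Fin.sum_univ_castSucc]
            simp [t', Fin.snoc]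
          rw [heq]
          refine Ideal.subset_span ⟨_, ⟨t', fun j => ?_, rfl⟩, rfl⟩
          refine Fin.lastCases ?_ ?_ j
          · simpa [t'] using ha
          · intro j'; simpa [t'] using ht j'

lemma aux_exists_d : ∀ (r : ℕ) (c : Fin r → ℕ) (n : ℕ), n ≤ ∑ j, c j →
    ∃ d : Fin r → ℕ, (∀ j, d j ≤ c j) ∧ ∑ j, d j = n := by
  intro r
  induction r with
  | zero => intro c n hn; simp at hn; exact ⟨fun _ => 0, fun j => j.elim0, by simp [hn]⟩
  | succ r ih =>
    intro c n hn
    rw [Fin.sum_univ_succ] at hn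
    set c' : Fin r → ℕ := fun j => c j.succ with hc'
    obtain ⟨d', hd', hsum⟩ := ih c' (n - min (c 0) n)
      (by have h : (∑ j, c' j) = Finset.univ.sum c' := rfl; omega)
    refine ⟨Fin.cons (min (c 0) n) d', fun j => ?_, ?_⟩
    · refine Fin.cases ?_ ?_ j
      · simp only [Fin.cons_zero]; omega
      · intro j'; simpa using hd' j'
    · rw [Fin.sum_univ_succ]
      simp only [Fin.cons_zero, Fin.cons_succ]
      omega

lemma aux_core [Field k] (I J : Ideal (MvPolynomial (Fin m) k)) (r : ℕ)
    (τ : Fin r → (Fin m →₀ ℕ)) (d : Fin r → ℕ)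
    (h0 : ∀ j, d j = 0 → monomial (τ j) (1 : k) ∈ I)
    (h1 : ∀ j, d j = 1 → monomial (τ j) (1 : k) ∈ J) (s : Finset (Fin r)) :
    monomial (∑ j ∈ s, τ j) (1 : k) ∈
      I ^ (s.filter (fun j => d j = 0)).card * J ^ (s.filter (fun j => d j = 1)).card := by
  classical
  induction s using Finset.induction_on with
  | empty => simp
  | insert a s ha ih =>
    rw [Finset.sum_insert ha, Finset.filter_insert, Finset.filter_insert]
    have hmul : monomial (τ a + ∑ j ∈ s, τ j) (1 : k)
        = monomial (τ a) 1 * monomial (∑ j ∈ s, τ j) 1 := by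
      rw [monomial_mul, one_mul]
    rw [hmul]
    by_cases hd0 : d a = 0
    · rw [if_pos hd0, if_neg (by omega), Finset.card_insert_of_notMem (by simp [ha])]
      have := Ideal.mul_mem_mul (h0 a hd0) ih
      convert this using 1
      ring
    · by_cases hd1 : d a = 1
      · rw [if_neg hd0, if_pos hd1, Finset.card_insert_of_notMem (by simp [ha])]
        have := Ideal.mul_mem_mul (h1 a hd1) ih
        convert this using 1
        ring
      · rw [if_neg hd0, if_neg hd1]
        exact Ideal.mul_mem_left _ _ ih

lemma aux_Jpow [Field k] (I J : Ideal (MvPolynomial (Fin m) k)) (hJJ : J * J ≤ I) :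
    ∀ o : ℕ, J ^ o ≤ I ^ (o / 2) := by
  intro o
  induction o using Nat.strong_induction_on with
  | _ o ih =>
    match o with
    | 0 => simp
    | 1 => simpa using le_top
    | (o + 2) =>
      have h2 : J ^ (o + 2) = J ^ o * (J * J) := by ring
      have hle : J ^ o * (J * J) ≤ I ^ (o / 2) * I := Ideal.mul_mono (ih o (by omega)) hJJ
      rw [h2]
      refine hle.trans ?_
      rw [← pow_succ]
      have h3 : (o + 2) / 2 = o / 2 + 1 := by omega
      rw [h3]

lemma aux_count (r : ℕ) (d : Fin r → ℕ) (d0 : ℕ) (hsum : d0 + ∑ j, d j = r) :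
    r / 2 ≤ (Finset.univ.filter (fun j => d j = 0)).card +
      (Finset.univ.filter (fun j => d j = 1)).card / 2 := by
  classical
  set U : Finset (Fin r) := Finset.univ
  set A := U.filter (fun j => d j = 0) with hA
  set U' := U.filter (fun j => ¬ d j = 0) with hU'
  set B := U'.filter (fun j => d j = 1) with hB
  set C := U'.filter (fun j => ¬ d j = 1) with hC
  have f1 : A.card + U'.card = r := by
    rw [hA, hU', Finset.card_filter_add_card_filter_not]
    simp [U]
  have f2 : B.card + C.card = U'.card := by
    rw [hB, hC, Finset.card_filter_add_card_filter_not]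
  have fB : B = U.filter (fun j => d j = 1) := by
    rw [hB, hU', Finset.filter_filter]
    apply Finset.filter_congr
    intro j _
    constructor
    · exact fun h => h.2
    · intro h; omega
  have hsplit1 : (∑ j ∈ A, min (d j) 2) + (∑ j ∈ U', min (d j) 2)
      = ∑ j ∈ U, min (d j) 2 := Finset.sum_filter_add_sum_filter_not _ _ _
  have hsplit2 : (∑ j ∈ B, min (d j) 2) + (∑ j ∈ C, min (d j) 2)
      = ∑ j ∈ U', min (d j) 2 := Finset.sum_filter_add_sum_filter_not _ _ _
  have hAz : (∑ j ∈ A, min (d j) 2) = 0 := by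
    apply Finset.sum_eq_zero
    intro j hj
    have : d j = 0 := (Finset.mem_filter.mp hj).2
    simp [this]
  have hBz : (∑ j ∈ B, min (d j) 2) = B.card := by
    rw [Finset.sum_congr rfl (fun j hj => ?_), Finset.sum_const, smul_eq_mul, mul_one]
    have : d j = 1 := (Finset.mem_filter.mp hj).2
    simp [this]
  have hCz : (∑ j ∈ C, min (d j) 2) = 2 * C.card := by
    rw [Finset.sum_congr rfl (fun j hj => ?_), Finset.sum_const, smul_eq_mul, mul_comm]
    have h1 : ¬ d j = 1 := (Finset.mem_filter.mp hj).2
    have h0 : ¬ d j = 0 := (Finset.mem_filter.mp (Finset.mem_filter.mp hj).1).2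
    omega
  have hle : (∑ j ∈ U, min (d j) 2) ≤ ∑ j ∈ U, d j :=
    Finset.sum_le_sum (fun j _ => min_le_left _ _)
  rw [← fB]
  omega

/-- If `I` is a `*`strongly Golod monomial ideal, `f = x^e` is a monomial with `f^r ∈ I^r`
for some `r ≥ 1`, and `x_i` divides `f`, then `(f / x_i)^r ∈ I^⌊r/2⌋`. -/
theorem div_pow_mem_of_pow_mem [Field k] (I : Ideal (MvPolynomial (Fin m) k))
    (hmon : IsMonomialIdeal I) (hsg : partialStar I * partialStar I ≤ I)
    (e : Fin m →₀ ℕ) (i : Fin m) (hi : e i ≠ 0) (r : ℕ) (hr : 1 ≤ r)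
    (hfr : (monomial e (1 : k)) ^ r ∈ I ^ r) :
    (monomial (e - Finsupp.single i 1) (1 : k)) ^ r ∈ I ^ (r / 2) := by
  classical
  have hM := aux_span_min_eq I hmon
  -- extract the generators t j
  have hfr' : monomial (r • e) (1 : k) ∈ I ^ r := by rwa [monomial_pow, one_pow] at hfr
  have hle := aux_pow_le_span_sums (k := k) {σ | IsMinMonomialGen I σ} r
  rw [← hM] at hle
  have hmem := hle hfr'
  rw [mem_ideal_span_monomial_image] at hmem
  have hsupp : (monomial (r • e) (1 : k)).support = {r • e} := by
    rw [support_monomial, if_neg one_ne_zero]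
  obtain ⟨σ, hσS, hσle⟩ := hmem (r • e) (by rw [hsupp]; exact Finset.mem_singleton_self _)
  obtain ⟨t, ht, rfl⟩ := hσS
  -- coordinate i bookkeeping
  have hA : ∀ b, (∑ j, t j) b = ∑ j, t j b := fun b => Finsupp.finset_sum_apply _ _ _
  have hB : ∀ b, (r • e) b = r * e b := fun b => by rw [Finsupp.smul_apply, smul_eq_mul]
  have hti : (∑ j, t j i) ≤ r * e i := by
    have := Finsupp.le_def.mp hσle i
    rwa [hA i, hB i] at this
  set T := ∑ j, t j i with hT
  obtain ⟨d, hd, hdsum⟩ := aux_exists_d r (fun j => t j i) (min r T)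
    (by have h : (∑ j, (fun j => t j i) j) = T := rfl; omega)
  have hrP : r ≤ r * e i := by
    calc r = r * 1 := (mul_one r).symm
    _ ≤ r * e i := Nat.mul_le_mul_left r (by omega)
  -- the quotient exponents
  set τ : Fin r → (Fin m →₀ ℕ) := fun j => t j - Finsupp.single i (d j) with hτdef
  have hτ : ∀ j, τ j + Finsupp.single i (d j) = t j := fun j =>
    tsub_add_cancel_of_le (Finsupp.single_le_iff.mpr (hd j))
  have h0 : ∀ j, d j = 0 → monomial (τ j) (1 : k) ∈ I := by
    intro j hj
    have : τ j = t j := by rw [← hτ j, hj, Finsupp.single_zero, add_zero]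
    rw [this]
    exact (ht j).1
  have h1 : ∀ j, d j = 1 → monomial (τ j) (1 : k) ∈ partialStar I := by
    intro j hj
    refine Ideal.subset_span ⟨t j, i, ht j, ?_, ?_⟩
    · have := hd j; omega
    · rw [hτdef]; simp only [hj]
  have hcore := aux_core I (partialStar I) r τ d h0 h1 Finset.univ
  -- ideal chain
  set z := (Finset.univ.filter (fun j => d j = 0)).card
  set o := (Finset.univ.filter (fun j => d j = 1)).card
  have hchain : I ^ z * (partialStar I) ^ o ≤ I ^ (r / 2) := by
    calc I ^ z * (partialStar I) ^ o ≤ I ^ z * I ^ (o / 2) :=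
          Ideal.mul_mono le_rfl (aux_Jpow I (partialStar I) hsg o)
      _ = I ^ (z + o / 2) := (pow_add I z (o / 2)).symm
      _ ≤ I ^ (r / 2) := Ideal.pow_le_pow_right (aux_count r d (r - min r T) (by omega))
  have hmemcore : monomial (∑ j, τ j) (1 : k) ∈ I ^ (r / 2) := hchain hcore
  -- final divisibility
  have hτi : ∀ j, τ j i + d j = t j i := by
    intro j
    have := congrArg (fun f => f i) (hτ j)
    simpa [Finsupp.add_apply, Finsupp.single_eq_same] using this
  have hSt : (∑ j, τ j) ≤ r • (e - Finsupp.single i 1) := by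
    rw [Finsupp.le_def]
    intro b
    rw [Finsupp.finset_sum_apply, Finsupp.smul_apply, smul_eq_mul, Finsupp.tsub_apply]
    by_cases hb : b = i
    · subst hb
      have hsτ : (∑ j, τ j b) + (∑ j, d j) = T := by
        rw [hT, ← Finset.sum_add_distrib]
        exact Finset.sum_congr rfl (fun j _ => hτi j)
      obtain ⟨E', hE'⟩ : ∃ E', e b = E' + 1 := ⟨e b - 1, by omega⟩
      have hP : r * e b = r * E' + r := by rw [hE', mul_add, mul_one]
      rw [hE']
      simp only [Finsupp.single_eq_same]
      have : E' + 1 - 1 = E' := by omega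
      rw [this]
      omega
    · have hsb : ∀ j, τ j b = t j b := by
        intro j
        rw [hτdef]
        simp only [Finsupp.tsub_apply, Finsupp.single_apply, if_neg (Ne.symm hb), tsub_zero]
      have hsum_b : (∑ j, τ j b) = ∑ j, t j b := Finset.sum_congr rfl (fun j _ => hsb j)
      have hle_b : (∑ j, t j b) ≤ r * e b := by
        have := Finsupp.le_def.mp hσle b
        rwa [hA b, hB b] at this
      rw [hsum_b, Finsupp.single_apply, if_neg (Ne.symm hb), tsub_zero]
      exact hle_b
  rw [monomial_pow, one_pow]
  have hfin : monomial (r • (e - Finsupp.single i 1)) (1 : k) =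
      monomial (r • (e - Finsupp.single i 1) - ∑ j, τ j) (1 : k) * monomial (∑ j, τ j) 1 := by
    rw [monomial_mul, one_mul, tsub_add_cancel_of_le hSt]
  rw [hfin]
  exact Ideal.mul_mem_left _ _ hmemcore
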